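/- Let R be a finite (not necessarily unital, not necessarily commutative) ring, let S be a non-commutative subring of R, and let p be a prime such that Pr(S, R) = (p² + p − 1)/p³. Then p divides |R|. Moreover, if p is the smallest prime dividing |R|, then the additive quotient group S/Z(S, R) is isomorphic to ℤ_p × ℤ_p. -/

import Mathlib

open scoped Pointwise

/-- The probability that a randomly chosen pair, one element from `S` and one from `T`,
commutes (multiplicatively). For a subring `S` of a finite ring `R` this gives
`Pr(S, R) = relCommProb R S Set.univ`, `Pr(R) = relCommProb R Set.univ Set.univ`, etc. -/
noncomputable def relCommProb (R : Type*) [NonUnitalRing R] (S T : Set R) : ℚ :=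
  (Nat.card {p : S × T // (p.1 : R) * (p.2 : R) = (p.2 : R) * (p.1 : R)} : ℚ) /
    ((Nat.card S : ℚ) * (Nat.card T : ℚ))

/-- `C_S(r)`: the centralizer of `r` in the subring `S`, as an additive subgroup of `R`.
Taking `S = ⊤` gives `C_R(r)`. -/
def centIn {R : Type*} [NonUnitalRing R] (S : NonUnitalSubring R) (r : R) : AddSubgroup R where
  carrier := {x | x ∈ S ∧ x * r = r * x}
  zero_mem' := ⟨S.zero_mem, by rw [zero_mul, mul_zero]⟩
  add_mem' := by
    rintro a b ⟨ha, ha'⟩ ⟨hb, hb'⟩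
    exact ⟨S.add_mem ha hb, by rw [add_mul, mul_add, ha', hb']⟩
  neg_mem' := by
    rintro a ⟨ha, ha'⟩
    exact ⟨S.neg_mem ha, by rw [neg_mul, mul_neg, ha']⟩

/-- `Z(S, R)`: the elements of the subring `S` commuting with every element of `R`,
as an additive subgroup of `R`.  Taking `S = ⊤` gives the center `Z(R)`. -/
def zCenter {R : Type*} [NonUnitalRing R] (S : NonUnitalSubring R) : AddSubgroup R where
  carrier := {x | x ∈ S ∧ ∀ r : R, x * r = r * x}
  zero_mem' := ⟨S.zero_mem, fun r => by rw [zero_mul, mul_zero]⟩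
  add_mem' := by
    rintro a b ⟨ha, ha'⟩ ⟨hb, hb'⟩
    exact ⟨S.add_mem ha hb, fun r => by rw [add_mul, mul_add, ha' r, hb' r]⟩
  neg_mem' := by
    rintro a ⟨ha, ha'⟩
    exact ⟨S.neg_mem ha, fun r => by rw [neg_mul, mul_neg, ha' r]⟩

/-- `K(S, R)`: the set of additive commutators `s*r - r*s` with `s ∈ S`, `r ∈ R`. -/
def kSet {R : Type*} [NonUnitalRing R] (S : NonUnitalSubring R) : Set R :=
  {x | ∃ s ∈ S, ∃ r : R, x = s * r - r * s}

/-- `[S, R]`: the additive subgroup of `(R, +)` generated by `K(S, R)`. -/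
def commSub {R : Type*} [NonUnitalRing R] (S : NonUnitalSubring R) : AddSubgroup R :=
  AddSubgroup.closure (kSet S)

/-- `[x, R]`: the additive subgroup of all commutators `x*y - y*x`, `y ∈ R`. -/
def elemComm {R : Type*} [NonUnitalRing R] (x : R) : AddSubgroup R where
  carrier := {z | ∃ y : R, z = x * y - y * x}
  zero_mem' := ⟨0, by simp⟩
  add_mem' := by
    rintro a b ⟨y, rfl⟩ ⟨z, rfl⟩
    exact ⟨y + z, by rw [mul_add, add_mul]; abel⟩
  neg_mem' := by
    rintro a ⟨y, rfl⟩
    exact ⟨-y, by rw [mul_neg, neg_mul]; abel⟩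
/-! ### Auxiliary lemmas -/

/-- The commutator map `y ↦ s*y - y*s` as an `AddMonoidHom`. -/
private def commHom {R : Type*} [NonUnitalRing R] (s : R) : R →+ R where
  toFun y := s * y - y * s
  map_zero' := by simp
  map_add' a b := by rw [mul_add, add_mul]; abel

private lemma commHom_range {R : Type*} [NonUnitalRing R] (s : R) :
    (commHom s).range = elemComm s := by
  ext z
  constructor
  · rintro ⟨y, rfl⟩; exact ⟨y, rfl⟩
  · rintro ⟨y, rfl⟩; exact ⟨y, rfl⟩

private lemma card_centralizer_mul {R : Type*} [NonUnitalRing R] [Finite R] (s : R) :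
    Nat.card {r : R // s * r = r * s} * Nat.card (elemComm s) = Nat.card R := by
  have h1 : Nat.card R = Nat.card (R ⧸ (commHom s).ker) * Nat.card (commHom s).ker :=
    AddSubgroup.card_eq_card_quotient_mul_card_addSubgroup _
  have h2 : Nat.card (R ⧸ (commHom s).ker) = Nat.card (elemComm s) := by
    rw [← commHom_range s]
    exact Nat.card_congr (QuotientAddGroup.quotientKerEquivRange (commHom s)).toEquiv
  have h3 : Nat.card (commHom s).ker = Nat.card {r : R // s * r = r * s} := by
    apply Nat.card_congr
    apply Equiv.subtypeEquivRight
    intro x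
    simp [commHom, AddMonoidHom.mem_ker, sub_eq_zero]
  rw [h1, h2, h3, mul_comm]

private lemma card_pairs_eq {R : Type*} [NonUnitalRing R] [Fintype R] (Sset : Set R)
    [Fintype Sset] :
    Nat.card {q : Sset × (Set.univ : Set R) // (q.1 : R) * (q.2 : R) = (q.2 : R) * (q.1 : R)} =
      ∑ s : Sset, Nat.card {r : R // (s : R) * r = r * (s : R)} := by
  classical
  rw [Nat.card_congr (Equiv.subtypeProdEquivSigmaSubtype
    (fun (a : Sset) (b : (Set.univ : Set R)) => (a : R) * (b : R) = (b : R) * (a : R)))]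
  have : ∀ s : Sset, Nat.card {b : (Set.univ : Set R) // (s : R) * (b : R) = (b : R) * (s : R)}
      = Nat.card {r : R // (s : R) * r = r * (s : R)} := by
    intro s
    exact Nat.card_congr (Equiv.subtypeEquiv (Equiv.Set.univ R) (fun b => Iff.rfl))
  rw [Nat.card_eq_fintype_card, Fintype.card_sigma]
  simp_rw [← Nat.card_eq_fintype_card]
  exact Finset.sum_congr rfl (fun s _ => this s)

private lemma comm_of_reps {R : Type*} [NonUnitalRing R] (S : NonUnitalSubring R) (x : R)
    {s t : R} (hs : ∃ w ∈ zCenter S, ∃ a : ℤ, s = w + a • x)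
    (ht : ∃ w ∈ zCenter S, ∃ b : ℤ, t = w + b • x) : s * t = t * s := by
  obtain ⟨w, hw, a, rfl⟩ := hs
  obtain ⟨v, hv, b, rfl⟩ := ht
  have hw' := hw.2
  have hv' := hv.2
  have e1 : w * v = v * w := hw' v
  have e2 : w * x = x * w := hw' x
  have e3 : v * x = x * v := hv' x
  simp only [add_mul, mul_add, smul_mul_assoc, mul_smul_comm, smul_smul, smul_add, e1, e2, ← e3,
    mul_comm a b]
  abel

private lemma iso_zmod_sq {Q : Type*} [AddCommGroup Q] [Finite Q] {q : ℕ} (hq : q.Prime)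
    (hcard : Nat.card Q = q ^ 2) (hnc : ¬ IsAddCyclic Q) :
    Nonempty (Q ≃+ ZMod q × ZMod q) := by
  haveI : Fact q.Prime := ⟨hq⟩
  have hsmul : ∀ x : Q, q • x = 0 := by
    intro x
    rw [← addOrderOf_dvd_iff_nsmul_eq_zero]
    have hd : addOrderOf x ∣ q ^ 2 := hcard ▸ addOrderOf_dvd_natCard x
    obtain ⟨k, hk2, hke⟩ := (Nat.dvd_prime_pow hq).mp hd
    interval_cases k
    · rw [hke]; simp
    · rw [hke]; simp
    · exfalso; exact hnc (isAddCyclic_of_addOrderOf_eq_card x (by rw [hcard, hke]))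
  letI : Module (ZMod q) Q := AddCommGroup.zmodModule hsmul
  haveI : Fintype Q := Fintype.ofFinite Q
  haveI hFree : Module.Free (ZMod q) Q := Module.Free.of_divisionRing (ZMod q) Q
  haveI hMF : Module.Finite (ZMod q) Q := Module.Finite.of_finite
  have hfr : Module.finrank (ZMod q) Q = 2 := by
    have h1 : Fintype.card Q = Fintype.card (ZMod q) ^ Module.finrank (ZMod q) Q :=
      Module.card_eq_pow_finrank
    rw [ZMod.card, ← Nat.card_eq_fintype_card, hcard] at h1
    exact (Nat.pow_right_injective hq.two_le h1.symm)
  let b : Module.Basis (Fin 2) (ZMod q) Q := @Module.finBasisOfFinrankEq (ZMod q) Q _ _ _ hFree _ hMF 2 hfr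
  refine ⟨b.equivFun.toAddEquiv.trans ?_⟩
  exact { piFinTwoEquiv (fun _ => ZMod q) with map_add' := fun x y => rfl }

/-- If `S` is a non-commutative subring of a finite ring `R` with `Pr(S, R) = (p² + p − 1)/p³`
for a prime `p`, then `p ∣ |R|`; moreover, if `p` is the smallest prime dividing `|R|`, then
the additive quotient group `S/Z(S, R)` is isomorphic to `ℤ_p × ℤ_p`. -/
theorem quotient_iso_of_relCommProb_eq' {R : Type*} [NonUnitalRing R] [Fintype R]
    (S : NonUnitalSubring R) (hncomm : ∃ s ∈ S, ∃ t ∈ S, s * t ≠ t * s)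
    (p : ℕ) (hp : p.Prime)
    (h : relCommProb R (S : Set R) Set.univ = ((p : ℚ) ^ 2 + (p : ℚ) - 1) / (p : ℚ) ^ 3) :
    p ∣ Nat.card R ∧
    ((∀ q : ℕ, q.Prime → q ∣ Nat.card R → p ≤ q) →
      Nonempty ((S.toAddSubgroup ⧸ (zCenter S).addSubgroupOf S.toAddSubgroup) ≃+
        (ZMod p × ZMod p))) := by
  classical
  obtain ⟨s₀, hs₀S, t₀, ht₀S, hst₀⟩ := hncomm
  haveI : Fintype ↥(S : Set R) := Fintype.ofFinite _
  have hp2 : 2 ≤ p := hp.two_le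
  set m := Nat.card R with hmdef
  have hm0 : 0 < m := Nat.card_pos
  set n := Nat.card ↥(S : Set R) with hndef
  have hn0 : 0 < n := Nat.card_pos
  set N := Nat.card {q : ↥(S : Set R) × ↥(Set.univ : Set R) //
    (q.1 : R) * (q.2 : R) = (q.2 : R) * (q.1 : R)} with hNdef
  have hsum : N = ∑ s : ↥(S : Set R), Nat.card {r : R // (s : R) * r = r * (s : R)} :=
    card_pairs_eq _
  have hprob : (N : ℚ) / ((n : ℚ) * (m : ℚ)) = ((p : ℚ) ^ 2 + p - 1) / (p : ℚ) ^ 3 := by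
    rw [← h, relCommProb, Nat.card_univ]
  have hp0Q : (0 : ℚ) < (p : ℚ) := by exact_mod_cast hp.pos
  have hkey : (N : ℚ) * (p : ℚ) ^ 3 = ((p : ℚ) ^ 2 + (p : ℚ) - 1) * ((n : ℚ) * (m : ℚ)) := by
    rw [div_eq_div_iff (by positivity) (by positivity)] at hprob
    linarith [hprob]
  have hkeyN : N * p ^ 3 = (p ^ 2 + p - 1) * (n * m) := by
    have hcast : ((N * p ^ 3 : ℕ) : ℚ) = (((p ^ 2 + p - 1) * (n * m) : ℕ) : ℚ) := by
      push_cast [Nat.cast_sub (show 1 ≤ p ^ 2 + p by nlinarith)]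
      linarith [hkey]
    exact_mod_cast hcast
  have hST : n = Nat.card ↥S.toAddSubgroup := by
    apply Nat.card_congr
    exact Equiv.subtypeEquivRight (fun x => by simp)
  have hnm : n ∣ m := by
    rw [hST]
    exact AddSubgroup.card_addSubgroup_dvd_card _
  have hpm : p ∣ m := by
    have h1 : p ∣ (p ^ 2 + p - 1) * (n * m) := by
      rw [← hkeyN]
      exact Dvd.dvd.mul_left (dvd_pow_self p (by norm_num)) N
    have h2 : ¬ p ∣ (p ^ 2 + p - 1) := by
      intro hdvd
      have h3 : p ∣ p ^ 2 + p := ⟨p + 1, by ring⟩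
      have h4 : p ∣ 1 := by
        have := Nat.dvd_sub h3 hdvd
        have he : p ^ 2 + p - (p ^ 2 + p - 1) = 1 := by omega
        rwa [he] at this
      rw [Nat.dvd_one] at h4
      omega
    have h5 : p ∣ n * m := (Nat.Coprime.dvd_of_dvd_mul_left
      (Nat.Prime.coprime_iff_not_dvd hp |>.mpr h2) h1)
    have h6 : p ∣ m * m := h5.trans (mul_dvd_mul_right hnm m)
    rcases (Nat.Prime.dvd_mul hp).mp h6 with h7 | h7 <;> exact h7
  refine ⟨hpm, ?_⟩
  intro hmin
  -- setup quotient
  have hZle : zCenter S ≤ S.toAddSubgroup := by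
    intro x hx
    simpa using hx.1
  set Z' := (zCenter S).addSubgroupOf S.toAddSubgroup with hZ'def
  set z := Nat.card ↥(zCenter S) with hzdef
  have hz0 : 0 < z := Nat.card_pos
  haveI : Finite (S.toAddSubgroup ⧸ Z') :=
    Finite.of_surjective _ (QuotientAddGroup.mk'_surjective Z')
  set k := Nat.card (S.toAddSubgroup ⧸ Z') with hkdef
  have hk0 : 0 < k := Nat.card_pos
  have hnkz : n = k * z := by
    rw [hST, AddSubgroup.card_eq_card_quotient_mul_card_addSubgroup Z', hzdef]
    congr 1
    exact Nat.card_congr (AddSubgroup.addSubgroupOfEquivOfLe hZle).toEquiv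
  have hzn : z ≤ n := by
    calc z = 1 * z := (one_mul z).symm
    _ ≤ k * z := Nat.mul_le_mul_right z hk0
    _ = n := hnkz.symm
  -- pointwise bounds
  have hcent : ∀ s : ↥(S : Set R), (s : R) ∈ zCenter S →
      Nat.card {r : R // (s : R) * r = r * (s : R)} = m := by
    intro s hs
    rw [hmdef]
    exact Nat.card_congr (Equiv.subtypeUnivEquiv (fun r => hs.2 r))
  have hnotcent : ∀ s : ↥(S : Set R), (s : R) ∉ zCenter S →
      p * Nat.card {r : R // (s : R) * r = r * (s : R)} ≤ m := by
    intro s hs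
    have hB := card_centralizer_mul (R := R) (s : R)
    have hne : ∃ r : R, (s : R) * r ≠ r * (s : R) := by
      by_contra hc
      push_neg at hc
      exact hs ⟨s.2, hc⟩
    obtain ⟨r, hr⟩ := hne
    have hmem : (s : R) * r - r * (s : R) ∈ elemComm (s : R) := ⟨r, rfl⟩
    have hbot : elemComm ((s : R)) ≠ ⊥ := by
      intro hb
      rw [hb, AddSubgroup.mem_bot, sub_eq_zero] at hmem
      exact hr hmem
    have hc1 : Nat.card (elemComm ((s : R))) ≠ 1 := fun h1 => hbot (AddSubgroup.card_eq_one.mp h1)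
    have hcpos : 0 < Nat.card (elemComm ((s : R))) := Nat.card_pos
    have hdvd : Nat.card (elemComm ((s : R))) ∣ m := AddSubgroup.card_addSubgroup_dvd_card _
    have hqp := Nat.minFac_prime hc1
    have hqm : (Nat.card (elemComm ((s : R)))).minFac ∣ m := (Nat.minFac_dvd _).trans hdvd
    have hple : p ≤ Nat.card (elemComm ((s : R))) :=
      (hmin _ hqp hqm).trans (Nat.minFac_le hcpos)
    calc p * Nat.card {r : R // (s : R) * r = r * (s : R)}
        ≤ Nat.card (elemComm ((s : R))) * Nat.card {r : R // (s : R) * r = r * (s : R)} :=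
          Nat.mul_le_mul_right _ hple
      _ = m := by rw [mul_comm]; exact hB
  -- cardinality of the central part
  have hzcard : (Finset.univ.filter (fun s : ↥(S : Set R) => (s : R) ∈ zCenter S)).card = z := by
    rw [← Fintype.card_subtype, hzdef]
    symm
    rw [Nat.card_eq_fintype_card]
    apply Fintype.card_congr
    exact { toFun := fun x => ⟨⟨x.1, hZle x.2⟩, x.2⟩
            invFun := fun s => ⟨s.1.1, s.2⟩
            left_inv := fun x => rfl
            right_inv := fun s => rfl }
  -- the sum inequality
  have hsumle : p * N ≤ z * (p * m) + (n - z) * m := by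
    rw [hsum, Finset.mul_sum]
    calc ∑ s : ↥(S : Set R), p * Nat.card {r : R // (s : R) * r = r * (s : R)}
        ≤ ∑ s : ↥(S : Set R), (if (s : R) ∈ zCenter S then p * m else m) := by
          apply Finset.sum_le_sum
          intro s _
          by_cases hsz : (s : R) ∈ zCenter S
          · rw [if_pos hsz, hcent s hsz]
          · rw [if_neg hsz]
            exact hnotcent s hsz
      _ = z * (p * m) + (n - z) * m := by
          rw [Finset.sum_ite, Finset.sum_const, Finset.sum_const, smul_eq_mul, smul_eq_mul,
            hzcard]
          congr 2
          rw [Finset.filter_not, Finset.card_sdiff_of_subset (Finset.filter_subset _ _), hzcard,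
            Finset.card_univ, ← Nat.card_eq_fintype_card, ← hndef]
  -- derive n ≤ p^2 * z over ℚ
  have hq1 : ((p : ℚ) ^ 2 + (p : ℚ) - 1) * ((n : ℚ) * (m : ℚ)) ≤
      (p : ℚ) ^ 2 * ((z : ℚ) * ((p : ℚ) * (m : ℚ)) + ((n : ℚ) - (z : ℚ)) * (m : ℚ)) := by
    have hc : ((p * N : ℕ) : ℚ) ≤ ((z * (p * m) + (n - z) * m : ℕ) : ℚ) := by
      exact_mod_cast hsumle
    push_cast [Nat.cast_sub hzn] at hc
    calc ((p : ℚ) ^ 2 + (p : ℚ) - 1) * ((n : ℚ) * (m : ℚ)) = (p : ℚ) ^ 2 * ((p : ℚ) * (N : ℚ)) := by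
          rw [← hkey]; ring
      _ ≤ _ := by nlinarith [hc]
  have hnp2z : (n : ℚ) ≤ (p : ℚ) ^ 2 * (z : ℚ) := by
    have hpos : (0 : ℚ) < ((p : ℚ) - 1) * (m : ℚ) := by
      apply mul_pos
      · have : (2 : ℚ) ≤ (p : ℚ) := by exact_mod_cast hp2
        linarith
      · exact_mod_cast hm0
    have hmul : (n : ℚ) * (((p : ℚ) - 1) * (m : ℚ)) ≤
        ((p : ℚ) ^ 2 * (z : ℚ)) * (((p : ℚ) - 1) * (m : ℚ)) := by nlinarith [hq1]
    exact le_of_mul_le_mul_right hmul hpos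
  have hkle : k ≤ p ^ 2 := by
    have hcast : (k : ℚ) * (z : ℚ) ≤ (p : ℚ) ^ 2 * (z : ℚ) := by
      have : ((n : ℕ) : ℚ) = (k : ℚ) * (z : ℚ) := by exact_mod_cast hnkz
      linarith [hnp2z, this]
    have hzQ : (0 : ℚ) < (z : ℚ) := by exact_mod_cast hz0
    have : (k : ℚ) ≤ (p : ℚ) ^ 2 := le_of_mul_le_mul_right hcast hzQ
    exact_mod_cast this
  -- non-cyclic
  have hnotcyc : ¬ IsAddCyclic (S.toAddSubgroup ⧸ Z') := by
    intro hcyc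
    obtain ⟨g, hg⟩ := hcyc.exists_generator
    obtain ⟨sg, hsg⟩ := QuotientAddGroup.mk'_surjective Z' g
    have hrep : ∀ t ∈ S, ∃ w ∈ zCenter S, ∃ a : ℤ, t = w + a • ((sg : R)) := by
      intro t ht
      have htS : t ∈ S.toAddSubgroup := by simpa using ht
      obtain ⟨a, ha⟩ := AddSubgroup.mem_zmultiples_iff.mp
        (hg (QuotientAddGroup.mk' Z' ⟨t, htS⟩))
      have hzero : QuotientAddGroup.mk' Z' ((⟨t, htS⟩ : S.toAddSubgroup) - a • sg) = 0 := by
        rw [map_sub, map_zsmul, hsg, ha, sub_self]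
      have hker : ((⟨t, htS⟩ : S.toAddSubgroup) - a • sg) ∈ Z' := by
        have := (QuotientAddGroup.eq_zero_iff _).mp hzero
        exact this
      rw [AddSubgroup.mem_addSubgroupOf] at hker
      refine ⟨_, hker, a, ?_⟩
      push_cast
      abel
    exact hst₀ (comm_of_reps S (sg : R) (hrep s₀ hs₀S) (hrep t₀ ht₀S))
  -- k = p^2
  have hk1 : k ≠ 1 := by
    intro h1
    apply hnotcyc
    have hsub : Subsingleton (S.toAddSubgroup ⧸ Z') := (Nat.card_eq_one_iff_unique.mp h1).1
    infer_instance
  have hkm : k ∣ m := (Dvd.intro z hnkz.symm).trans hnm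
  have hq1p := Nat.minFac_prime hk1
  have hpq1 : p ≤ k.minFac := hmin _ hq1p ((Nat.minFac_dvd k).trans hkm)
  have hkdiv : k / k.minFac ≠ 1 := by
    intro h1
    have hkq : k = k.minFac := by
      conv_lhs => rw [← Nat.div_mul_cancel (Nat.minFac_dvd k)]
      rw [h1, one_mul]
    apply hnotcyc
    haveI : Fact (k.minFac).Prime := ⟨hq1p⟩
    exact isAddCyclic_of_prime_card (hkdef ▸ hkq)
  have hkq0 : 0 < k / k.minFac :=
    Nat.div_pos (Nat.minFac_le hk0) hq1p.pos
  have hq2p := Nat.minFac_prime hkdiv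
  have hq2m : (k / k.minFac).minFac ∣ m :=
    ((Nat.minFac_dvd _).trans (Nat.div_dvd_of_dvd (Nat.minFac_dvd k))).trans hkm
  have hpq2 : p ≤ (k / k.minFac).minFac := hmin _ hq2p hq2m
  have hpp : p * p ≤ k := by
    calc p * p ≤ k.minFac * (k / k.minFac) :=
          Nat.mul_le_mul hpq1 (hpq2.trans (Nat.minFac_le hkq0))
      _ = k := Nat.mul_div_cancel' (Nat.minFac_dvd k)
  have hkeq : Nat.card (S.toAddSubgroup ⧸ Z') = p ^ 2 := by
    rw [← hkdef]
    have : p ^ 2 = p * p := sq p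
    omega
  exact iso_zmod_sq hp hkeq hnotcyc
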